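/- Let m < −5/2, let a₁, a₂, a₃ ∈ S^m(ℝ) and a(η) = a₁(η₁)a₂(η₂)a₃(η₃), and let b : ℝ³ → ℂ be measurable with ‖b‖ < ∞. Fix 0 < α < β and 0 < δ < min(1, α). For ξ ∈ ℝ and κ₂, κ₃ ∈ [α,β] set Z(ξ,κ₂,κ₃) = {η ∈ ℝ³ : |η₁| < (1−δ)|ξ|, |η₂| < (κ₂−δ)|ξ|, |η₃| < (κ₃−δ)|ξ|}. Then there exists C > 0 such that for all ξ with |ξ| > 1 and all κ₂, κ₃ ∈ [α, β]: | ∫_{Z(ξ,κ₂,κ₃) ∩ A_{GGG}(ξ,κ₂,κ₃)} ( a(ξθ−η) − a(ξθ) ) b(η) dη | ≤ C |ξ|^{3m−1}. -/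

import Mathlib

open MeasureTheory

/-- The Japanese bracket `⟨t⟩ = (1+t²)^{1/2}`. -/
noncomputable def jb (t : ℝ) : ℝ := Real.sqrt (1 + t ^ 2)

/-- The symbol class `S^m(ℝ)`. -/
def SymbolClass (m : ℝ) (a : ℝ → ℂ) : Prop :=
  ContDiff ℝ (⊤ : ℕ∞) a ∧
    ∀ k : ℕ, ∃ C : ℝ, 0 < C ∧ ∀ t : ℝ, ‖iteratedDeriv k a t‖ ≤ C * jb t ^ (m - (k : ℝ))

/-- `a(η) = a₁(η₁)a₂(η₂)a₃(η₃)`. -/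
noncomputable def aprod (a₁ a₂ a₃ : ℝ → ℂ) (η : Fin 3 → ℝ) : ℂ :=
  a₁ (η 0) * a₂ (η 1) * a₃ (η 2)

/-- `ξθ = (ξ, κ₂ξ, κ₃ξ)`. -/
def xitheta (ξ κ₂ κ₃ : ℝ) : Fin 3 → ℝ := ![ξ, κ₂ * ξ, κ₃ * ξ]

/-- `A_{GGG}(ξ,κ₂,κ₃) = {η : |η₁−ξ| ≥ δ|ξ|, |η₂−κ₂ξ| ≥ δ|ξ|, |η₃−κ₃ξ| ≥ δ|ξ|}`. -/
def A_GGG (δ ξ κ₂ κ₃ : ℝ) : Set (Fin 3 → ℝ) :=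
  {η | δ * |ξ| ≤ |η 0 - ξ| ∧ δ * |ξ| ≤ |η 1 - κ₂ * ξ| ∧ δ * |ξ| ≤ |η 2 - κ₃ * ξ|}

/-- `‖b‖² = ∫ ⟨η₁⟩^{−2m−1}⟨η₂⟩^{−2m−1}⟨η₃⟩^{−2m−1}|b(η)|² dη` as an `ℝ≥0∞`-valued integral. -/
noncomputable def bNormSq (m : ℝ) (b : (Fin 3 → ℝ) → ℂ) : ENNReal :=
  ∫⁻ η : Fin 3 → ℝ, ENNReal.ofReal
    (jb (η 0) ^ (-2 * m - 1) * jb (η 1) ^ (-2 * m - 1) * jb (η 2) ^ (-2 * m - 1) * ‖b η‖ ^ 2)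

/-- `Z(ξ,κ₂,κ₃) = {η : |η₁| < (1−δ)|ξ|, |η₂| < (κ₂−δ)|ξ|, |η₃| < (κ₃−δ)|ξ|}`. -/
def Zset (δ ξ κ₂ κ₃ : ℝ) : Set (Fin 3 → ℝ) :=
  {η | |η 0| < (1 - δ) * |ξ| ∧ |η 1| < (κ₂ - δ) * |ξ| ∧ |η 2| < (κ₃ - δ) * |ξ|}

lemma jb_pos (t : ℝ) : 0 < jb t := Real.sqrt_pos.mpr (by positivity)

lemma one_le_jb (t : ℝ) : 1 ≤ jb t := by
  rw [jb]
  nlinarith [Real.sq_sqrt (show (0:ℝ) ≤ 1 + t^2 by positivity),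
    Real.sqrt_nonneg (1 + t^2), sq_nonneg t]

lemma abs_le_jb (t : ℝ) : |t| ≤ jb t := by
  rw [jb, ← Real.sqrt_sq_eq_abs]
  exact Real.sqrt_le_sqrt (by nlinarith)

lemma jb_rpow_le {t s p : ℝ} (hs : 0 < s) (hst : s ≤ |t|) (hp : p ≤ 0) :
    jb t ^ p ≤ s ^ p :=
  Real.rpow_le_rpow_of_nonpos hs (hst.trans (abs_le_jb t)) hp

lemma continuous_jb : Continuous jb := by
  unfold jb; fun_prop

lemma jb_sq (t : ℝ) : jb t ^ (2:ℝ) = 1 + t ^ 2 := by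
  rw [show (2:ℝ) = ((2:ℕ):ℝ) by norm_num, Real.rpow_natCast, jb, Real.sq_sqrt (by positivity)]

lemma jb_rpow_eq (t p : ℝ) : jb t ^ p = ((1:ℝ) + t ^ 2) ^ (p / 2) := by
  rw [jb, Real.sqrt_eq_rpow, ← Real.rpow_mul (by positivity : (0:ℝ) ≤ 1 + t ^ 2)]
  ring_nf

lemma coord_est {m : ℝ} (hm : m ≤ 0) {a : ℝ → ℂ} (ha : SymbolClass m a) :
    ∃ C : ℝ, 0 < C ∧
      (∀ s : ℝ, 0 < s → ∀ t : ℝ, s ≤ |t| → ‖a t‖ ≤ C * s ^ m) ∧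
      (∀ s : ℝ, 0 < s → ∀ x y : ℝ, (∀ t ∈ Set.uIcc x y, s ≤ |t|) →
        ‖a x - a y‖ ≤ C * s ^ (m - 1) * |x - y|) := by
  obtain ⟨C₀, hC₀, h0⟩ := ha.2 0
  obtain ⟨C₁, hC₁, h1⟩ := ha.2 1
  refine ⟨C₀ + C₁, by linarith, ?_, ?_⟩
  · intro s hs t ht
    have := h0 t
    simp only [iteratedDeriv_zero, Nat.cast_zero, sub_zero] at this
    calc ‖a t‖ ≤ C₀ * jb t ^ m := this
      _ ≤ C₀ * s ^ m := by
          exact mul_le_mul_of_nonneg_left (jb_rpow_le hs ht hm) hC₀.le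
      _ ≤ (C₀ + C₁) * s ^ m := by
          have h' : (0:ℝ) ≤ s ^ m := (Real.rpow_pos_of_pos hs m).le
          nlinarith [mul_nonneg hC₁.le h']
  · intro s hs x y hseg
    have hderiv : ∀ t ∈ Set.uIcc x y, HasDerivWithinAt a (deriv a t) (Set.uIcc x y) t :=
      fun t _ => ((ha.1.differentiable (by simp)) t).hasDerivAt.hasDerivWithinAt
    have hbound : ∀ t ∈ Set.uIcc x y, ‖deriv a t‖ ≤ C₁ * s ^ (m - 1) := by
      intro t ht
      have := h1 t
      simp only [iteratedDeriv_one, Nat.cast_one] at this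
      calc ‖deriv a t‖ ≤ C₁ * jb t ^ (m - 1) := this
        _ ≤ C₁ * s ^ (m - 1) :=
            mul_le_mul_of_nonneg_left (jb_rpow_le hs (hseg t ht) (by linarith)) hC₁.le
    have := Convex.norm_image_sub_le_of_norm_hasDerivWithin_le hderiv hbound
      (convex_uIcc x y) Set.right_mem_uIcc Set.left_mem_uIcc
    calc ‖a x - a y‖ ≤ (C₁ * s ^ (m-1)) * ‖x - y‖ := this
      _ ≤ (C₀ + C₁) * s ^ (m - 1) * |x - y| := by
          rw [Real.norm_eq_abs]
          have h1 : (0:ℝ) ≤ s ^ (m-1) := (Real.rpow_pos_of_pos hs _).le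
          have h2 : (0:ℝ) ≤ |x - y| := abs_nonneg _
          nlinarith [mul_nonneg hC₀.le (mul_nonneg h1 h2)]

lemma seg_abs {δ ξ κ h : ℝ} (hδ : 0 ≤ δ) (hκ : δ ≤ κ) (hh : |h| < (κ - δ) * |ξ|) :
    ∀ t ∈ Set.uIcc (κ * ξ) (κ * ξ - h), δ * |ξ| ≤ |t| := by
  intro t ht
  rw [Set.mem_uIcc] at ht
  obtain ⟨hh1, hh2⟩ := abs_lt.mp hh
  rcases le_or_gt 0 ξ with hξ | hξ
  · rw [abs_of_nonneg hξ] at *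
    have h1 : δ * ξ ≤ t := by
      rcases ht with ⟨h3, _⟩ | ⟨h3, _⟩ <;> nlinarith
    calc δ * ξ ≤ t := h1
      _ ≤ |t| := le_abs_self t
  · rw [abs_of_neg hξ] at *
    have h1 : t ≤ δ * ξ := by
      rcases ht with ⟨_, h3⟩ | ⟨_, h3⟩ <;> nlinarith
    calc δ * -ξ ≤ -t := by linarith
      _ ≤ |t| := neg_le_abs t


lemma measurable_jb_rpow (i : Fin 3) (c : ℝ) :
    Measurable fun η : Fin 3 → ℝ => jb (η i) ^ c :=
  ((continuous_jb.comp (continuous_apply i)).rpow_const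
    (fun _ => Or.inl (jb_pos _).ne')).measurable

lemma integrable_jb_rpow {p : ℝ} (hp : p < -1) :
    Integrable (fun t : ℝ => jb t ^ p) := by
  have hnr : (Module.finrank ℝ ℝ : ℝ) < -p := by
    rw [Module.finrank_self]; push_cast; linarith
  have h := integrable_rpow_neg_one_add_norm_sq (E := ℝ) (μ := volume) hnr
  simp only [Real.norm_eq_abs, sq_abs, neg_neg] at h
  simp_rw [jb_rpow_eq]
  exact h

lemma integrable_prod_jb {p : ℝ} (hp : p < -1) :
    Integrable (fun η : Fin 3 → ℝ => jb (η 0) ^ p * jb (η 1) ^ p * jb (η 2) ^ p) := by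
  have h := MeasureTheory.Integrable.fintype_prod (𝕜 := ℝ) (ι := Fin 3)
    (f := fun _ t => jb t ^ p) (fun _ => integrable_jb_rpow hp)
  simpa [Fin.prod_univ_three, mul_assoc, ← volume_pi] using h

lemma prod_jb_nonneg (η : Fin 3 → ℝ) (c : ℝ) :
    0 ≤ jb (η 0) ^ c * jb (η 1) ^ c * jb (η 2) ^ c :=
  mul_nonneg (mul_nonneg (Real.rpow_nonneg (jb_pos _).le _)
    (Real.rpow_nonneg (jb_pos _).le _)) (Real.rpow_nonneg (jb_pos _).le _)

lemma key_CS (m : ℝ) (hm : m < -5/2) (b : (Fin 3 → ℝ) → ℂ) (hb : Measurable b)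
    (hbnorm : bNormSq m b < ⊤) :
    ∃ M : ENNReal, M ≠ ⊤ ∧
      ∫⁻ η : Fin 3 → ℝ, ENNReal.ofReal ((|η 0| + |η 1| + |η 2|) * ‖b η‖) ≤ M := by
  set q : ℝ := (-2*m-1)/2 with hq
  set r : ℝ := (2*m+1)/2 with hr
  set F : (Fin 3 → ℝ) → ENNReal := fun η =>
    ENNReal.ofReal ((|η 0| + |η 1| + |η 2|) *
      (jb (η 0) ^ r * jb (η 1) ^ r * jb (η 2) ^ r)) with hF
  set G : (Fin 3 → ℝ) → ENNReal := fun η =>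
    ENNReal.ofReal (jb (η 0) ^ q * jb (η 1) ^ q * jb (η 2) ^ q * ‖b η‖) with hG
  have hwmeas : Measurable fun η : Fin 3 → ℝ => |η 0| + |η 1| + |η 2| :=
    (((measurable_pi_apply 0).abs.add (measurable_pi_apply 1).abs).add
      (measurable_pi_apply 2).abs)
  have hFmeas : Measurable F :=
    (hwmeas.mul (((measurable_jb_rpow 0 r).mul (measurable_jb_rpow 1 r)).mul
      (measurable_jb_rpow 2 r))).ennreal_ofReal
  have hGmeas : Measurable G :=
    ((((measurable_jb_rpow 0 q).mul (measurable_jb_rpow 1 q)).mul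
      (measurable_jb_rpow 2 q)).mul hb.norm).ennreal_ofReal
  have h22 : Real.HolderConjugate 2 2 := (Real.holderConjugate_iff_eq_conjExponent one_lt_two).mpr (by norm_num)
  have hol := ENNReal.lintegral_mul_le_Lp_mul_Lq volume h22 hFmeas.aemeasurable
    hGmeas.aemeasurable
  have hwnn : ∀ η : Fin 3 → ℝ, (0:ℝ) ≤ |η 0| + |η 1| + |η 2| := fun η => by positivity
  -- F * G pointwise
  have hcancel : ∀ t : ℝ, jb t ^ r * jb t ^ q = 1 := by
    intro t
    rw [← Real.rpow_add (jb_pos t)]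
    have h0 : r + q = 0 := by rw [hq, hr]; ring
    rw [h0, Real.rpow_zero]
  have hFG : ∀ η, (F * G) η = ENNReal.ofReal ((|η 0| + |η 1| + |η 2|) * ‖b η‖) := by
    intro η
    simp only [Pi.mul_apply, hF, hG]
    rw [← ENNReal.ofReal_mul (mul_nonneg (hwnn η) (prod_jb_nonneg η r))]
    congr 1
    calc (|η 0| + |η 1| + |η 2|) * (jb (η 0) ^ r * jb (η 1) ^ r * jb (η 2) ^ r) *
        (jb (η 0) ^ q * jb (η 1) ^ q * jb (η 2) ^ q * ‖b η‖)
        = (|η 0| + |η 1| + |η 2|) * ‖b η‖ *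
            ((jb (η 0) ^ r * jb (η 0) ^ q) * ((jb (η 1) ^ r * jb (η 1) ^ q) *
              (jb (η 2) ^ r * jb (η 2) ^ q))) := by ring
      _ = (|η 0| + |η 1| + |η 2|) * ‖b η‖ := by
          rw [hcancel, hcancel, hcancel]; ring
  -- G squared
  have hGsq : ∀ t : ℝ, (jb t ^ q) ^ 2 = jb t ^ (-2*m-1) := by
    intro t
    rw [sq, ← Real.rpow_add (jb_pos t)]
    congr 1
    rw [hq]; ring
  have hG2 : ∀ η, G η ^ (2:ℝ) = ENNReal.ofReal
      (jb (η 0) ^ (-2 * m - 1) * jb (η 1) ^ (-2 * m - 1) * jb (η 2) ^ (-2 * m - 1) *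
        ‖b η‖ ^ 2) := by
    intro η
    simp only [hG]
    rw [ENNReal.ofReal_rpow_of_nonneg (mul_nonneg (prod_jb_nonneg η q) (norm_nonneg _))
      (by norm_num)]
    congr 1
    rw [show (2:ℝ) = ((2:ℕ):ℝ) by norm_num, Real.rpow_natCast]
    calc (jb (η 0) ^ q * jb (η 1) ^ q * jb (η 2) ^ q * ‖b η‖) ^ 2
        = (jb (η 0) ^ q) ^ 2 * (jb (η 1) ^ q) ^ 2 * (jb (η 2) ^ q) ^ 2 * ‖b η‖ ^ 2 := by
          ring
      _ = _ := by rw [hGsq, hGsq, hGsq]; ring_nf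
  -- F squared bound
  have hw3 : ∀ x y z : ℝ, (|x|+|y|+|z|)^2 ≤ 3*((1+x^2)*(1+y^2)*(1+z^2)) := by
    intro x y z
    nlinarith [sq_abs x, sq_abs y, sq_abs z, sq_nonneg (|x|-|y|), sq_nonneg (|x|-|z|),
      sq_nonneg (|y|-|z|), sq_nonneg (x*y), sq_nonneg (x*z), sq_nonneg (y*z),
      sq_nonneg (x*y*z), abs_nonneg x, abs_nonneg y, abs_nonneg z]
  have hFsq : ∀ t : ℝ, (jb t ^ r) ^ 2 = jb t ^ (2*m+1) := by
    intro t
    rw [sq, ← Real.rpow_add (jb_pos t)]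
    congr 1
    rw [hr]; ring
  have hsplit : ∀ t : ℝ, jb t ^ (2*m+3) = (1+t^2) * jb t ^ (2*m+1) := by
    intro t
    rw [show (2:ℝ)*m+3 = 2 + (2*m+1) by ring, Real.rpow_add (jb_pos t), jb_sq]
  have hF2 : ∀ η, F η ^ (2:ℝ) ≤ ENNReal.ofReal
      (3 * (jb (η 0) ^ (2*m+3) * jb (η 1) ^ (2*m+3) * jb (η 2) ^ (2*m+3))) := by
    intro η
    simp only [hF]
    rw [ENNReal.ofReal_rpow_of_nonneg (mul_nonneg (hwnn η) (prod_jb_nonneg η r))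
      (by norm_num)]
    apply ENNReal.ofReal_le_ofReal
    rw [show (2:ℝ) = ((2:ℕ):ℝ) by norm_num, Real.rpow_natCast]
    calc ((|η 0| + |η 1| + |η 2|) * (jb (η 0) ^ r * jb (η 1) ^ r * jb (η 2) ^ r)) ^ 2
        = (|η 0| + |η 1| + |η 2|)^2 *
            ((jb (η 0) ^ r)^2 * (jb (η 1) ^ r)^2 * (jb (η 2) ^ r)^2) := by ring
      _ = (|η 0| + |η 1| + |η 2|)^2 *
            (jb (η 0) ^ (2*m+1) * jb (η 1) ^ (2*m+1) * jb (η 2) ^ (2*m+1)) := by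
          rw [hFsq, hFsq, hFsq]
      _ ≤ (3*((1+(η 0)^2)*(1+(η 1)^2)*(1+(η 2)^2))) *
            (jb (η 0) ^ (2*m+1) * jb (η 1) ^ (2*m+1) * jb (η 2) ^ (2*m+1)) := by
          exact mul_le_mul_of_nonneg_right (hw3 _ _ _) (prod_jb_nonneg η _)
      _ = 3 * (jb (η 0) ^ (2*m+3) * jb (η 1) ^ (2*m+3) * jb (η 2) ^ (2*m+3)) := by
          rw [hsplit, hsplit, hsplit]; ring
  -- finiteness of the F-integral
  have hp3 : (2*m+3 : ℝ) < -1 := by linarith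
  have hItop : (∫⁻ η : Fin 3 → ℝ, ENNReal.ofReal
      (3 * (jb (η 0) ^ (2*m+3) * jb (η 1) ^ (2*m+3) * jb (η 2) ^ (2*m+3)))) < ⊤ := by
    have hI : Integrable (fun η : Fin 3 → ℝ =>
        3 * (jb (η 0) ^ (2*m+3) * jb (η 1) ^ (2*m+3) * jb (η 2) ^ (2*m+3))) :=
      (integrable_prod_jb hp3).const_mul 3
    exact hI.lintegral_lt_top
  refine ⟨(∫⁻ η : Fin 3 → ℝ, ENNReal.ofReal
      (3 * (jb (η 0) ^ (2*m+3) * jb (η 1) ^ (2*m+3) * jb (η 2) ^ (2*m+3)))) ^ (1/2:ℝ) *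
      (bNormSq m b) ^ (1/2:ℝ), ?_, ?_⟩
  · exact ENNReal.mul_ne_top (ENNReal.rpow_ne_top_of_nonneg (by norm_num) hItop.ne)
      (ENNReal.rpow_ne_top_of_nonneg (by norm_num) hbnorm.ne)
  · calc ∫⁻ η : Fin 3 → ℝ, ENNReal.ofReal ((|η 0| + |η 1| + |η 2|) * ‖b η‖)
        = ∫⁻ η : Fin 3 → ℝ, (F * G) η := (lintegral_congr fun η => (hFG η).symm)
      _ ≤ (∫⁻ η : Fin 3 → ℝ, F η ^ (2:ℝ)) ^ (1/2:ℝ) * (∫⁻ η : Fin 3 → ℝ, G η ^ (2:ℝ)) ^ (1/2:ℝ) := hol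
      _ ≤ _ := by
          apply mul_le_mul'
          · exact ENNReal.rpow_le_rpow (lintegral_mono fun η => hF2 η) (by norm_num)
          · rw [bNormSq]
            rw [lintegral_congr fun η => hG2 η]


theorem stmt9 (m : ℝ) (hm : m < -5 / 2) (a₁ a₂ a₃ : ℝ → ℂ)
    (h₁ : SymbolClass m a₁) (h₂ : SymbolClass m a₂) (h₃ : SymbolClass m a₃)
    (b : (Fin 3 → ℝ) → ℂ) (hb : Measurable b) (hbnorm : bNormSq m b < ⊤)
    (α β δ : ℝ) (hα : 0 < α) (hαβ : α < β) (hδ : 0 < δ) (hδ1 : δ < min 1 α) :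
    ∃ C : ℝ, 0 < C ∧
      ∀ ξ : ℝ, 1 < |ξ| → ∀ κ₂ ∈ Set.Icc α β, ∀ κ₃ ∈ Set.Icc α β,
        ‖∫ η in Zset δ ξ κ₂ κ₃ ∩ A_GGG δ ξ κ₂ κ₃,
            (aprod a₁ a₂ a₃ (xitheta ξ κ₂ κ₃ - η) - aprod a₁ a₂ a₃ (xitheta ξ κ₂ κ₃)) * b η‖
          ≤ C * |ξ| ^ (3 * m - 1) := by
  have hm0 : m ≤ 0 := by linarith
  have hm' : m < -5/2 := by linarith
  obtain ⟨C₁, hC₁, hv₁, hd₁⟩ := coord_est hm0 h₁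
  obtain ⟨C₂, hC₂, hv₂, hd₂⟩ := coord_est hm0 h₂
  obtain ⟨C₃, hC₃, hv₃, hd₃⟩ := coord_est hm0 h₃
  obtain ⟨M, hMtop, hM⟩ := key_CS m hm' b hb hbnorm
  have hδ1' : δ < 1 := lt_of_lt_of_le hδ1 (min_le_left _ _)
  have hδα : δ < α := lt_of_lt_of_le hδ1 (min_le_right _ _)
  have hwmeas : Measurable fun η : Fin 3 → ℝ => |η 0| + |η 1| + |η 2| :=
    (((measurable_pi_apply 0).abs.add (measurable_pi_apply 1).abs).add
      (measurable_pi_apply 2).abs)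
  set K : ℝ := C₁ * C₂ * C₃ * δ ^ (3*m-1) with hK
  have hδe : (0:ℝ) < δ ^ (3*m-1) := Real.rpow_pos_of_pos hδ _
  have hKpos : 0 < K := by positivity
  have hMr : (0:ℝ) ≤ M.toReal := ENNReal.toReal_nonneg
  refine ⟨K * M.toReal + 1, by positivity, ?_⟩
  intro ξ hξ κ₂ hκ₂ κ₃ hκ₃
  have hξ0 : (0:ℝ) < |ξ| := lt_trans one_pos hξ
  set s : ℝ := δ * |ξ| with hs
  have hspos : 0 < s := mul_pos hδ hξ0
  have hsm : (0:ℝ) ≤ s ^ m := (Real.rpow_pos_of_pos hspos m).le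
  have hsm1 : (0:ℝ) ≤ s ^ (m-1) := (Real.rpow_pos_of_pos hspos (m-1)).le
  set w : (Fin 3 → ℝ) → ℝ := fun η => |η 0| + |η 1| + |η 2| with hw
  set c : ℝ := K * |ξ| ^ (3*m-1) with hc
  have hξe : (0:ℝ) < |ξ| ^ (3*m-1) := Real.rpow_pos_of_pos hξ0 _
  have hcpos : 0 < c := mul_pos hKpos hξe
  set T : ℝ := C₁ * C₂ * C₃ * s ^ (3*m-1) with hT
  have hTc : T = c := by
    rw [hT, hc, hK, hs, Real.mul_rpow hδ.le (abs_nonneg ξ)]; ring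
  have hptw : ∀ η ∈ Zset δ ξ κ₂ κ₃ ∩ A_GGG δ ξ κ₂ κ₃,
      ‖(aprod a₁ a₂ a₃ (xitheta ξ κ₂ κ₃ - η) - aprod a₁ a₂ a₃ (xitheta ξ κ₂ κ₃)) * b η‖
        ≤ c * (w η * ‖b η‖) := by
    rintro η ⟨⟨hZ1, hZ2, hZ3⟩, -⟩
    have hseg₁ : ∀ t ∈ Set.uIcc ξ (ξ - η 0), s ≤ |t| := by
      have := seg_abs (δ := δ) (ξ := ξ) (κ := 1) (h := η 0) hδ.le hδ1'.le hZ1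
      simpa using this
    have hseg₂ : ∀ t ∈ Set.uIcc (κ₂ * ξ) (κ₂ * ξ - η 1), s ≤ |t| :=
      seg_abs hδ.le (le_trans hδα.le hκ₂.1) hZ2
    have hseg₃ : ∀ t ∈ Set.uIcc (κ₃ * ξ) (κ₃ * ξ - η 2), s ≤ |t| :=
      seg_abs hδ.le (le_trans hδα.le hκ₃.1) hZ3
    have hu₁ : ‖a₁ (ξ - η 0)‖ ≤ C₁ * s ^ m := hv₁ s hspos _ (hseg₁ _ Set.right_mem_uIcc)
    have hx₁ : ‖a₁ ξ‖ ≤ C₁ * s ^ m := hv₁ s hspos _ (hseg₁ _ Set.left_mem_uIcc)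
    have hu₂ : ‖a₂ (κ₂ * ξ - η 1)‖ ≤ C₂ * s ^ m := hv₂ s hspos _ (hseg₂ _ Set.right_mem_uIcc)
    have hx₂ : ‖a₂ (κ₂ * ξ)‖ ≤ C₂ * s ^ m := hv₂ s hspos _ (hseg₂ _ Set.left_mem_uIcc)
    have hu₃ : ‖a₃ (κ₃ * ξ - η 2)‖ ≤ C₃ * s ^ m := hv₃ s hspos _ (hseg₃ _ Set.right_mem_uIcc)
    have hx₃ : ‖a₃ (κ₃ * ξ)‖ ≤ C₃ * s ^ m := hv₃ s hspos _ (hseg₃ _ Set.left_mem_uIcc)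
    have hdd₁ : ‖a₁ (ξ - η 0) - a₁ ξ‖ ≤ C₁ * s ^ (m-1) * |η 0| := by
      have := hd₁ s hspos (ξ - η 0) ξ (fun t ht => hseg₁ t (Set.uIcc_comm ξ (ξ - η 0) ▸ ht))
      calc ‖a₁ (ξ - η 0) - a₁ ξ‖ ≤ C₁ * s ^ (m-1) * |ξ - η 0 - ξ| := this
        _ = C₁ * s ^ (m-1) * |η 0| := by rw [show ξ - η 0 - ξ = -(η 0) by ring, abs_neg]
    have hdd₂ : ‖a₂ (κ₂ * ξ - η 1) - a₂ (κ₂ * ξ)‖ ≤ C₂ * s ^ (m-1) * |η 1| := by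
      have := hd₂ s hspos (κ₂ * ξ - η 1) (κ₂ * ξ)
        (fun t ht => hseg₂ t (Set.uIcc_comm (κ₂ * ξ) (κ₂ * ξ - η 1) ▸ ht))
      calc ‖a₂ (κ₂ * ξ - η 1) - a₂ (κ₂ * ξ)‖
          ≤ C₂ * s ^ (m-1) * |κ₂ * ξ - η 1 - κ₂ * ξ| := this
        _ = C₂ * s ^ (m-1) * |η 1| := by
            rw [show κ₂ * ξ - η 1 - κ₂ * ξ = -(η 1) by ring, abs_neg]
    have hdd₃ : ‖a₃ (κ₃ * ξ - η 2) - a₃ (κ₃ * ξ)‖ ≤ C₃ * s ^ (m-1) * |η 2| := by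
      have := hd₃ s hspos (κ₃ * ξ - η 2) (κ₃ * ξ)
        (fun t ht => hseg₃ t (Set.uIcc_comm (κ₃ * ξ) (κ₃ * ξ - η 2) ▸ ht))
      calc ‖a₃ (κ₃ * ξ - η 2) - a₃ (κ₃ * ξ)‖
          ≤ C₃ * s ^ (m-1) * |κ₃ * ξ - η 2 - κ₃ * ξ| := this
        _ = C₃ * s ^ (m-1) * |η 2| := by
            rw [show κ₃ * ξ - η 2 - κ₃ * ξ = -(η 2) by ring, abs_neg]
    have hprodexp : s ^ (m-1) * s ^ m * s ^ m = s ^ (3*m-1) := by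
      rw [← Real.rpow_add hspos, ← Real.rpow_add hspos]; congr 1; ring
    have hdecomp : aprod a₁ a₂ a₃ (xitheta ξ κ₂ κ₃ - η) - aprod a₁ a₂ a₃ (xitheta ξ κ₂ κ₃)
        = (a₁ (ξ - η 0) - a₁ ξ) * a₂ (κ₂ * ξ - η 1) * a₃ (κ₃ * ξ - η 2)
          + a₁ ξ * (a₂ (κ₂ * ξ - η 1) - a₂ (κ₂ * ξ)) * a₃ (κ₃ * ξ - η 2)
          + a₁ ξ * a₂ (κ₂ * ξ) * (a₃ (κ₃ * ξ - η 2) - a₃ (κ₃ * ξ)) := by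
      simp only [aprod, xitheta, Pi.sub_apply, Matrix.cons_val_zero, Matrix.cons_val_one,
        Matrix.head_cons, Matrix.cons_val_two, Matrix.tail_cons]
      ring
    have ht1 : ‖(a₁ (ξ - η 0) - a₁ ξ) * a₂ (κ₂ * ξ - η 1) * a₃ (κ₃ * ξ - η 2)‖
        ≤ T * |η 0| := by
      rw [norm_mul, norm_mul]
      calc ‖a₁ (ξ - η 0) - a₁ ξ‖ * ‖a₂ (κ₂ * ξ - η 1)‖ * ‖a₃ (κ₃ * ξ - η 2)‖
          ≤ (C₁ * s ^ (m-1) * |η 0|) * (C₂ * s ^ m) * (C₃ * s ^ m) :=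
            mul_le_mul (mul_le_mul hdd₁ hu₂ (norm_nonneg _)
                (by positivity)) hu₃ (norm_nonneg _)
              (mul_nonneg (by positivity) (by positivity))
        _ = T * |η 0| := by rw [hT, ← hprodexp]; ring
    have ht2 : ‖a₁ ξ * (a₂ (κ₂ * ξ - η 1) - a₂ (κ₂ * ξ)) * a₃ (κ₃ * ξ - η 2)‖
        ≤ T * |η 1| := by
      rw [norm_mul, norm_mul]
      calc ‖a₁ ξ‖ * ‖a₂ (κ₂ * ξ - η 1) - a₂ (κ₂ * ξ)‖ * ‖a₃ (κ₃ * ξ - η 2)‖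
          ≤ (C₁ * s ^ m) * (C₂ * s ^ (m-1) * |η 1|) * (C₃ * s ^ m) :=
            mul_le_mul (mul_le_mul hx₁ hdd₂ (norm_nonneg _)
                (by positivity)) hu₃ (norm_nonneg _)
              (mul_nonneg (by positivity) (by positivity))
        _ = T * |η 1| := by rw [hT, ← hprodexp]; ring
    have ht3 : ‖a₁ ξ * a₂ (κ₂ * ξ) * (a₃ (κ₃ * ξ - η 2) - a₃ (κ₃ * ξ))‖
        ≤ T * |η 2| := by
      rw [norm_mul, norm_mul]
      calc ‖a₁ ξ‖ * ‖a₂ (κ₂ * ξ)‖ * ‖a₃ (κ₃ * ξ - η 2) - a₃ (κ₃ * ξ)‖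
          ≤ (C₁ * s ^ m) * (C₂ * s ^ m) * (C₃ * s ^ (m-1) * |η 2|) :=
            mul_le_mul (mul_le_mul hx₁ hx₂ (norm_nonneg _)
                (by positivity)) hdd₃ (norm_nonneg _)
              (mul_nonneg (by positivity) (by positivity))
        _ = T * |η 2| := by rw [hT, ← hprodexp]; ring
    have hsum : ‖aprod a₁ a₂ a₃ (xitheta ξ κ₂ κ₃ - η) - aprod a₁ a₂ a₃ (xitheta ξ κ₂ κ₃)‖
        ≤ T * w η := by
      rw [hdecomp]
      have htri := norm_add₃_le (E := ℂ)
        (a := (a₁ (ξ - η 0) - a₁ ξ) * a₂ (κ₂ * ξ - η 1) * a₃ (κ₃ * ξ - η 2))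
        (b := a₁ ξ * (a₂ (κ₂ * ξ - η 1) - a₂ (κ₂ * ξ)) * a₃ (κ₃ * ξ - η 2))
        (c := a₁ ξ * a₂ (κ₂ * ξ) * (a₃ (κ₃ * ξ - η 2) - a₃ (κ₃ * ξ)))
      have hwη : T * w η = T * |η 0| + T * |η 1| + T * |η 2| := by rw [hw]; ring
      linarith
    rw [norm_mul, ← hTc]
    calc ‖aprod a₁ a₂ a₃ (xitheta ξ κ₂ κ₃ - η) - aprod a₁ a₂ a₃ (xitheta ξ κ₂ κ₃)‖ * ‖b η‖
        ≤ (T * w η) * ‖b η‖ := mul_le_mul_of_nonneg_right hsum (norm_nonneg _)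
      _ = T * (w η * ‖b η‖) := by ring
  -- integral estimate
  have hgmeas : Measurable fun η : Fin 3 → ℝ => ENNReal.ofReal (c * (w η * ‖b η‖)) :=
    (measurable_const.mul (hwmeas.mul hb.norm)).ennreal_ofReal
  calc ‖∫ η in Zset δ ξ κ₂ κ₃ ∩ A_GGG δ ξ κ₂ κ₃,
          (aprod a₁ a₂ a₃ (xitheta ξ κ₂ κ₃ - η) - aprod a₁ a₂ a₃ (xitheta ξ κ₂ κ₃)) * b η‖
      ≤ (∫⁻ η in Zset δ ξ κ₂ κ₃ ∩ A_GGG δ ξ κ₂ κ₃, ENNReal.ofReal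
          ‖(aprod a₁ a₂ a₃ (xitheta ξ κ₂ κ₃ - η) - aprod a₁ a₂ a₃ (xitheta ξ κ₂ κ₃)) * b η‖).toReal :=
        norm_integral_le_lintegral_norm _
    _ ≤ (ENNReal.ofReal c * M).toReal := by
        apply ENNReal.toReal_mono (ENNReal.mul_ne_top ENNReal.ofReal_ne_top hMtop)
        calc ∫⁻ η in Zset δ ξ κ₂ κ₃ ∩ A_GGG δ ξ κ₂ κ₃, ENNReal.ofReal
              ‖(aprod a₁ a₂ a₃ (xitheta ξ κ₂ κ₃ - η) - aprod a₁ a₂ a₃ (xitheta ξ κ₂ κ₃)) * b η‖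
            ≤ ∫⁻ η in Zset δ ξ κ₂ κ₃ ∩ A_GGG δ ξ κ₂ κ₃,
                ENNReal.ofReal (c * (w η * ‖b η‖)) :=
              setLIntegral_mono hgmeas (fun η hη => ENNReal.ofReal_le_ofReal (hptw η hη))
          _ ≤ ∫⁻ η, ENNReal.ofReal (c * (w η * ‖b η‖)) := setLIntegral_le_lintegral _ _
          _ = ENNReal.ofReal c * ∫⁻ η, ENNReal.ofReal (w η * ‖b η‖) := by
              simp_rw [ENNReal.ofReal_mul hcpos.le]
              exact lintegral_const_mul' _ _ ENNReal.ofReal_ne_top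
          _ ≤ ENNReal.ofReal c * M := mul_le_mul_right hM _
    _ = c * M.toReal := by rw [ENNReal.toReal_mul, ENNReal.toReal_ofReal hcpos.le]
    _ ≤ (K * M.toReal + 1) * |ξ| ^ (3 * m - 1) := by
        rw [hc]; nlinarith
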